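/- arXiv:1001.1126 — 2 statements merged into one kernel-verified Lean document; each statement's English description precedes it below -/
import Mathlib

section
/- The polynomials g_1 = 2X_0 + X_4, g_2 = -3X_1 + X_3, g_3 = X_2 + 5X_5, g_4 = 2X_0 + X_5 have no common zero on the variety defined by J = (X_3^2 - X_2X_4, X_2X_3 - X_1X_4, X_2^2 - X_1X_3, X_1^2 - X_0X_5) other than the origin; equivalently, the ideal J + (g_1, g_2, g_3, g_4) in Q[X_0,...,X_5] contains a power of the irrelevant ideal (X_0,...,X_5). -/
open MvPolynomial

/-- In `ℚ[X_0,…,X_5]`, the ideal `J + (g_1,g_2,g_3,g_4)` contains a power of the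
irrelevant ideal `(X_0,…,X_5)`, where `J` is the toric ideal
`(X_3² - X_2X_4, X_2X_3 - X_1X_4, X_2² - X_1X_3, X_1² - X_0X_5)` and
`g_1 = 2X_0 + X_4`, `g_2 = -3X_1 + X_3`, `g_3 = X_2 + 5X_5`, `g_4 = 2X_0 + X_5`.
Equivalently, the `g_i` have no common zero on `V(J)` other than the origin. -/
theorem toric_basepoint_free :
    let R := MvPolynomial (Fin 6) ℚ
    let x : Fin 6 → R := MvPolynomial.X
    let J : Ideal R := Ideal.span
      {x 3 ^ 2 - x 2 * x 4, x 2 * x 3 - x 1 * x 4,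
       x 2 ^ 2 - x 1 * x 3, x 1 ^ 2 - x 0 * x 5}
    let G : Ideal R := Ideal.span
      {2 * x 0 + x 4, -3 * x 1 + x 3, x 2 + 5 * x 5, 2 * x 0 + x 5}
    let I : Ideal R := Ideal.span (Set.range x)
    ∃ k : ℕ, I ^ k ≤ J ⊔ G := by
  intro R x J G I
  have hfg : I.FG := Submodule.fg_span (Set.finite_range x)
  apply Ideal.exists_pow_le_of_le_radical_of_fg _ hfg
  set K : Ideal R := J ⊔ G with hK
  -- generators are in K
  have hb1 : x 3 ^ 2 - x 2 * x 4 ∈ K :=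
    Ideal.mem_sup_left (Ideal.subset_span (by simp))
  have hb4 : x 1 ^ 2 - x 0 * x 5 ∈ K :=
    Ideal.mem_sup_left (Ideal.subset_span (by simp))
  have hg1 : 2 * x 0 + x 4 ∈ K :=
    Ideal.mem_sup_right (Ideal.subset_span (by simp))
  have hg2 : -3 * x 1 + x 3 ∈ K :=
    Ideal.mem_sup_right (Ideal.subset_span (by simp))
  have hg3 : x 2 + 5 * x 5 ∈ K :=
    Ideal.mem_sup_right (Ideal.subset_span (by simp))
  have hg4 : 2 * x 0 + x 5 ∈ K :=
    Ideal.mem_sup_right (Ideal.subset_span (by simp))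
  -- 2 * x0 ^ 2 ∈ K
  have h2 : (2 : R) * x 0 ^ 2 ∈ K := by
    have key : (2 : R) * x 0 ^ 2 =
        (1 : R) * (x 3 ^ 2 - x 2 * x 4) + (-9 : R) * (x 1 ^ 2 - x 0 * x 5)
        + (10 * x 0 + (x 2 + 5 * x 5) - 5 * (2 * x 0 + x 5)) * (2 * x 0 + x 4)
        + (-(-3 * x 1 + x 3) - 6 * x 1) * (-3 * x 1 + x 3)
        + (-2 * x 0) * (x 2 + 5 * x 5)
        + (x 0) * (2 * x 0 + x 5) := by ring
    rw [key]
    exact Ideal.add_mem _ (Ideal.add_mem _ (Ideal.add_mem _ (Ideal.add_mem _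
      (Ideal.add_mem _ (Ideal.mul_mem_left _ _ hb1) (Ideal.mul_mem_left _ _ hb4))
      (Ideal.mul_mem_left _ _ hg1)) (Ideal.mul_mem_left _ _ hg2))
      (Ideal.mul_mem_left _ _ hg3)) (Ideal.mul_mem_left _ _ hg4)
  have h0 : x 0 ^ 2 ∈ K := by
    have : x 0 ^ 2 = C (1/2 : ℚ) * ((2 : R) * x 0 ^ 2) := by
      rw [(map_ofNat C 2).symm, ← mul_assoc, ← C_mul]
      norm_num
    rw [this]
    exact Ideal.mul_mem_left _ _ h2
  -- squares of the other variables
  have h5 : x 5 ^ 2 ∈ K := by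
    have : x 5 ^ 2 = (x 5 - 2 * x 0) * (2 * x 0 + x 5) + 4 * (x 0 ^ 2) := by ring
    rw [this]
    exact Ideal.add_mem _ (Ideal.mul_mem_left _ _ hg4) (Ideal.mul_mem_left _ _ h0)
  have h4 : x 4 ^ 2 ∈ K := by
    have : x 4 ^ 2 = (x 4 - 2 * x 0) * (2 * x 0 + x 4) + 4 * (x 0 ^ 2) := by ring
    rw [this]
    exact Ideal.add_mem _ (Ideal.mul_mem_left _ _ hg1) (Ideal.mul_mem_left _ _ h0)
  have h1 : x 1 ^ 2 ∈ K := by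
    have : x 1 ^ 2 = (x 1 ^ 2 - x 0 * x 5) + (x 0) * (2 * x 0 + x 5)
        + (-2) * (x 0 ^ 2) := by ring
    rw [this]
    exact Ideal.add_mem _ (Ideal.add_mem _ hb4 (Ideal.mul_mem_left _ _ hg4))
      (Ideal.mul_mem_left _ _ h0)
  have h3 : x 3 ^ 2 ∈ K := by
    have : x 3 ^ 2 = (x 3 + 3 * x 1) * (-3 * x 1 + x 3) + 9 * (x 1 ^ 2) := by ring
    rw [this]
    exact Ideal.add_mem _ (Ideal.mul_mem_left _ _ hg2) (Ideal.mul_mem_left _ _ h1)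
  have h2' : x 2 ^ 2 ∈ K := by
    have : x 2 ^ 2 = (x 2 - 5 * x 5) * (x 2 + 5 * x 5) + 25 * (x 5 ^ 2) := by ring
    rw [this]
    exact Ideal.add_mem _ (Ideal.mul_mem_left _ _ hg3) (Ideal.mul_mem_left _ _ h5)
  -- I ≤ radical K
  rw [Ideal.span_le]
  rintro p ⟨i, rfl⟩
  fin_cases i
  · exact Ideal.mem_radical_of_pow_mem (Ideal.le_radical h0)
  · exact Ideal.mem_radical_of_pow_mem (Ideal.le_radical h1)
  · exact Ideal.mem_radical_of_pow_mem (Ideal.le_radical h2')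
  · exact Ideal.mem_radical_of_pow_mem (Ideal.le_radical h3)
  · exact Ideal.mem_radical_of_pow_mem (Ideal.le_radical h4)
  · exact Ideal.mem_radical_of_pow_mem (Ideal.le_radical h5)
end

section
/- The polynomial F of degree 6 listed in the example (the implicit equation) is irreducible over Q. -/
open MvPolynomial

/-- The degree-6 implicit equation of Example 2.1. -/
noncomputable def implicitF : MvPolynomial (Fin 4) ℚ :=
  let T1 : MvPolynomial (Fin 4) ℚ := MvPolynomial.X 0
  let T2 : MvPolynomial (Fin 4) ℚ := MvPolynomial.X 1
  let T3 : MvPolynomial (Fin 4) ℚ := MvPolynomial.X 2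
  let T4 : MvPolynomial (Fin 4) ℚ := MvPolynomial.X 3
  2809*T1^2*T2^4 + 124002*T2^6 - 5618*T1^3*T2^2*T3 + 66816*T1*T2^4*T3
  + 2809*T1^4*T3^2 - 50580*T1^2*T2^2*T3^2 + 86976*T2^4*T3^2 + 212*T1^3*T3^3
  - 14210*T1*T2^2*T3^3 + 3078*T1^2*T3^4 + 13632*T2^2*T3^4 + 116*T1*T3^5
  + 841*T3^6 + 14045*T1^3*T2^2*T4 - 169849*T1*T2^4*T4 - 14045*T1^4*T3*T4
  + 261327*T1^2*T2^2*T3*T4 - 468288*T2^4*T3*T4 - 7208*T1^3*T3^2*T4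
  + 157155*T1*T2^2*T3^3*T4 - 31098*T1^2*T3^3*T4 - 129215*T2^2*T3^3*T4
  - 4528*T1*T3^4*T4 - 12673*T3^5*T4 - 16695*T1^2*T2^2*T4^2 + 169600*T2^4*T4^2
  + 30740*T1^3*T3*T4^2 - 433384*T1*T2^2*T3*T4^2 + 82434*T1^2*T3^2*T4^2
  + 269745*T2^2*T3^2*T4^2 + 36696*T1*T3^3*T4^2 + 63946*T3^4*T4^2
  + 2775*T1*T2^2*T4^3 - 19470*T1^2*T3*T4^4 + 177675*T2^2*T3*T4^3
  - 85360*T1*T3^2*T4^3 - 109490*T3^3*T4^3 - 125*T2^2*T4^4 + 2900*T1*T3*T4^4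
  + 7325*T3^2*T4^4 - 125*T3*T4^5

/- ### Auxiliary material for the irreducibility proof -/

/-- The Eisenstein specialization: `implicitF` viewed as a polynomial in `T2`,
evaluated at `(T1, T3, T4) = (1, -2, -2)` and with `x = T2`. -/
noncomputable def qInt : Polynomial ℤ :=
  Polynomial.C 124002 * Polynomial.X^6 - Polynomial.C 637973 * Polynomial.X^4
    + Polynomial.C 12139778 * Polynomial.X^2 - Polynomial.C 346864

theorem qInt_prim : qInt.IsPrimitive := by
  intro r hr
  rw [Polynomial.C_dvd_iff_dvd_coeff] at hr
  have h6 := hr 6; have h4 := hr 4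
  simp [qInt, Polynomial.coeff_X, Polynomial.coeff_C] at h6 h4
  have hd := Int.dvd_coe_gcd h6 h4
  have hg : Int.gcd 124002 637973 = 1 := by norm_num [Int.gcd]
  rw [hg] at hd
  exact isUnit_of_dvd_one (by exact_mod_cast hd)

theorem qInt_irr : Irreducible qInt := by
  have hdeg : qInt.degree = 6 := by
    unfold qInt; compute_degree!
  apply Polynomial.irreducible_of_eisenstein_criterion
    (P := Ideal.span {(7:ℤ)})
  · rw [Ideal.span_singleton_prime (by norm_num)]; norm_num
  · rw [Polynomial.leadingCoeff, Polynomial.natDegree_eq_of_degree_eq_some hdeg]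
    simp [qInt, Ideal.mem_span_singleton, Polynomial.coeff_X, Polynomial.coeff_C]
  · rw [hdeg]
    intro n hn
    have hn' : n < 6 := by exact_mod_cast hn
    interval_cases n <;>
      simp [qInt, Ideal.mem_span_singleton, Polynomial.coeff_X, Polynomial.coeff_C] <;> decide
  · rw [hdeg]; norm_num
  · rw [Ideal.span_singleton_pow, Ideal.mem_span_singleton]
    simp [qInt, Polynomial.coeff_X, Polynomial.coeff_C]
  · exact qInt_prim

theorem qQ_irr : Irreducible (qInt.map (Int.castRingHom ℚ)) :=
  (Polynomial.IsPrimitive.Int.irreducible_iff_irreducible_map_cast qInt_prim).mp qInt_irr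

/-- The monic rational version of the Eisenstein specialization. -/
noncomputable def P6 : Polynomial ℚ :=
  Polynomial.X^6 - Polynomial.C ((637973:ℚ)/124002) * Polynomial.X^4
    + Polynomial.C ((12139778:ℚ)/124002) * Polynomial.X^2
    - Polynomial.C ((346864:ℚ)/124002)

theorem P6_irr : Irreducible P6 := by
  have h : P6 = Polynomial.C ((124002:ℚ)⁻¹) * qInt.map (Int.castRingHom ℚ) := by
    simp only [qInt, P6, Polynomial.map_add, Polynomial.map_sub, Polynomial.map_mul,
      Polynomial.map_pow, Polynomial.map_C, Polynomial.map_X,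
      mul_sub, mul_add, ← mul_assoc, ← Polynomial.C_mul]
    norm_num
  rw [h, irreducible_isUnit_mul]
  · exact qQ_irr
  · exact (isUnit_iff_ne_zero.mpr (by norm_num)).map Polynomial.C

abbrev Q3 := MvPolynomial (Fin 3) ℚ

/-- coefficient of `T2^4` in `implicitF`, in variables `u = X 0 (=T1)`,
`v = X 1 (=T3)`, `w = X 2 (=T4)`. -/
noncomputable def c4 : Q3 :=
  let u : Q3 := X 0; let v : Q3 := X 1; let w : Q3 := X 2
  2809*u^2 + 66816*u*v + 86976*v^2 - 169849*u*w - 468288*v*w + 169600*w^2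

/-- coefficient of `T2^2` in `implicitF`. -/
noncomputable def c2 : Q3 :=
  let u : Q3 := X 0; let v : Q3 := X 1; let w : Q3 := X 2
  13632*v^4 - 5618*u^3*v - 50580*u^2*v^2 - 14210*u*v^3 + 14045*u^3*w
  + 261327*u^2*v*w + 157155*u*v^3*w - 129215*v^3*w - 16695*u^2*w^2
  - 433384*u*v*w^2 + 269745*v^2*w^2 + 2775*u*w^3 + 177675*v*w^3 - 125*w^4

/-- coefficient of `T2^0` in `implicitF`. -/
noncomputable def c0 : Q3 :=
  let u : Q3 := X 0; let v : Q3 := X 1; let w : Q3 := X 2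
  2809*u^4*v^2 + 212*u^3*v^3 + 3078*u^2*v^4 + 116*u*v^5 + 841*v^6
  - 14045*u^4*v*w - 7208*u^3*v^2*w - 31098*u^2*v^3*w - 4528*u*v^4*w
  - 12673*v^5*w + 30740*u^3*v*w^2 + 82434*u^2*v^2*w^2 + 36696*u*v^3*w^2
  + 63946*v^4*w^2 - 19470*u^2*v*w^4 - 85360*u*v^2*w^3 - 109490*v^3*w^3
  + 2900*u*v*w^4 + 7325*v^2*w^4 - 125*v*w^5

/-- The isomorphism `ℚ[T1,T2,T3,T4] ≃ (ℚ[T1,T3,T4])[T2]`. -/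
noncomputable def e4 : MvPolynomial (Fin 4) ℚ ≃ₐ[ℚ] Polynomial Q3 :=
  (renameEquiv ℚ (Equiv.swap (0 : Fin 4) 1)).trans (finSuccEquiv ℚ 3)

theorem he0 : e4 (X 0) = Polynomial.C (X 0) := by
  rw [e4]
  simp only [AlgEquiv.trans_apply, renameEquiv_apply, rename_X]
  rw [show (Equiv.swap (0:Fin 4) 1) 0 = Fin.succ 0 by decide, finSuccEquiv_X_succ]
theorem he1 : e4 (X 1) = Polynomial.X := by
  rw [e4]
  simp only [AlgEquiv.trans_apply, renameEquiv_apply, rename_X]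
  rw [show (Equiv.swap (0:Fin 4) 1) 1 = 0 by decide, finSuccEquiv_X_zero]
theorem he2 : e4 (X 2) = Polynomial.C (X 1) := by
  rw [e4]
  simp only [AlgEquiv.trans_apply, renameEquiv_apply, rename_X]
  rw [show (Equiv.swap (0:Fin 4) 1) 2 = Fin.succ 1 by decide, finSuccEquiv_X_succ]
theorem he3 : e4 (X 3) = Polynomial.C (X 2) := by
  rw [e4]
  simp only [AlgEquiv.trans_apply, renameEquiv_apply, rename_X]
  rw [show (Equiv.swap (0:Fin 4) 1) 3 = Fin.succ 2 by decide, finSuccEquiv_X_succ]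

set_option maxHeartbeats 2000000 in
theorem hE : e4 implicitF =
    Polynomial.C (C 124002) * Polynomial.X^6 + Polynomial.C c4 * Polynomial.X^4
      + Polynomial.C c2 * Polynomial.X^2 + Polynomial.C c0 := by
  simp only [implicitF, c4, c2, c0, map_add, map_sub, map_mul, map_pow, map_ofNat,
    map_neg, he0, he1, he2, he3]
  ring

/-- The monic scaled version of `implicitF` as a polynomial in `T2`. -/
noncomputable def G3 : Polynomial Q3 :=
  Polynomial.X^6 + Polynomial.C (C ((124002:ℚ)⁻¹) * c4) * Polynomial.X^4
    + Polynomial.C (C ((124002:ℚ)⁻¹) * c2) * Polynomial.X^2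
    + Polynomial.C (C ((124002:ℚ)⁻¹) * c0)

theorem G3_monic : G3.Monic := by
  have h : G3 = Polynomial.X^6 +
      (Polynomial.C (C ((124002:ℚ)⁻¹) * c4) * Polynomial.X^4
        + Polynomial.C (C ((124002:ℚ)⁻¹) * c2) * Polynomial.X^2
        + Polynomial.C (C ((124002:ℚ)⁻¹) * c0)) := by
    rw [G3]; ring
  rw [h]
  apply Polynomial.monic_X_pow_add
  apply lt_of_le_of_lt (Polynomial.degree_add_le _ _)
  apply max_lt
  · apply lt_of_le_of_lt (Polynomial.degree_add_le _ _)
    apply max_lt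
    · exact lt_of_le_of_lt (Polynomial.degree_C_mul_X_pow_le _ _) (by decide)
    · exact lt_of_le_of_lt (Polynomial.degree_C_mul_X_pow_le _ _) (by decide)
  · exact lt_of_le_of_lt Polynomial.degree_C_le (by decide)

theorem hEG : Polynomial.C (C 124002) * G3 =
    Polynomial.C (C 124002) * Polynomial.X^6 + Polynomial.C c4 * Polynomial.X^4
      + Polynomial.C c2 * Polynomial.X^2 + Polynomial.C c0 := by
  have hc : (C (124002:ℚ) : Q3) * C ((124002:ℚ)⁻¹) = 1 := by
    rw [← map_mul]; norm_num
  simp only [G3, mul_add, ← Polynomial.C_mul, ← mul_assoc, hc, one_mul]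

theorem G3_map : G3.map (eval ![(1:ℚ),-2,-2]) = P6 := by
  have h4 : eval ![(1:ℚ),-2,-2] (C ((124002:ℚ)⁻¹) * c4) = -(637973/124002) := by
    simp [c4]; norm_num
  have h2 : eval ![(1:ℚ),-2,-2] (C ((124002:ℚ)⁻¹) * c2) = 12139778/124002 := by
    simp [c2]; norm_num
  have h0 : eval ![(1:ℚ),-2,-2] (C ((124002:ℚ)⁻¹) * c0) = -(346864/124002) := by
    simp [c0]; norm_num
  simp only [G3, P6, Polynomial.map_add, Polynomial.map_mul, Polynomial.map_pow,
    Polynomial.map_C, Polynomial.map_X, h4, h2, h0, map_neg, Polynomial.C_neg]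
  ring

theorem G3_irr : Irreducible G3 :=
  Polynomial.Monic.irreducible_of_irreducible_map (eval ![(1:ℚ),-2,-2]) G3 G3_monic
    (G3_map ▸ P6_irr)

/-- The degree-6 implicit equation of Example 2.1 is irreducible over `ℚ`. -/
theorem implicitF_irreducible : Irreducible implicitF := by
  have hu : IsUnit (Polynomial.C (C (124002:ℚ)) : Polynomial Q3) :=
    ((isUnit_iff_ne_zero.mpr (by norm_num)).map (C : ℚ →+* Q3)).map Polynomial.C
  have h1 : Irreducible (e4 implicitF) := by
    rw [hE, ← hEG, irreducible_isUnit_mul hu]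
    exact G3_irr
  exact (MulEquiv.irreducible_iff e4).mp h1
end
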